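/- Let p ≥ 5 be a prime and q = p^r with r ≥ 1. Then for every integer a with 0 < a ≤ q−2 and every integer i with 0 ≤ i ≤ r−1, one has −⌊2ap^i/(q−1)⌋ − ⌊−3ap^i/(q−1)⌋ = 1 − ⌊⟨p^i/3⟩ − ap^i/(q−1)⌋ − ⌊⟨2p^i/3⟩ − ap^i/(q−1)⌋ − ⌊⟨p^i/2⟩ + ap^i/(q−1)⌋. -/

import Mathlib

private lemma feq (z : ℤ) (y : ℚ) (h1 : (z:ℚ) ≤ y) (h2 : y < z + 1) : ⌊y⌋ = z :=
  Int.floor_eq_iff.mpr ⟨h1, h2⟩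

private lemma floor_aux (t : ℚ) (h0 : 0 < t) (h1 : t < 1) :
    -⌊2*t⌋ - ⌊-3*t⌋ = 1 - ⌊1/3 - t⌋ - ⌊2/3 - t⌋ - ⌊1/2 + t⌋ := by
  rcases le_or_gt t (1/3) with h | h
  · rw [feq 0 (2*t) (by push_cast; linarith) (by push_cast; linarith),
      feq (-1) (-3*t) (by push_cast; linarith) (by push_cast; linarith),
      feq 0 (1/3 - t) (by push_cast; linarith) (by push_cast; linarith),
      feq 0 (2/3 - t) (by push_cast; linarith) (by push_cast; linarith),
      feq 0 (1/2 + t) (by push_cast; linarith) (by push_cast; linarith)]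
    decide
  · rcases lt_or_ge t (1/2) with h2 | h2
    · rw [feq 0 (2*t) (by push_cast; linarith) (by push_cast; linarith),
        feq (-2) (-3*t) (by push_cast; linarith) (by push_cast; linarith),
        feq (-1) (1/3 - t) (by push_cast; linarith) (by push_cast; linarith),
        feq 0 (2/3 - t) (by push_cast; linarith) (by push_cast; linarith),
        feq 0 (1/2 + t) (by push_cast; linarith) (by push_cast; linarith)]
      decide
    · rcases le_or_gt t (2/3) with h3 | h3
      · rw [feq 1 (2*t) (by push_cast; linarith) (by push_cast; linarith),
          feq (-2) (-3*t) (by push_cast; linarith) (by push_cast; linarith),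
          feq (-1) (1/3 - t) (by push_cast; linarith) (by push_cast; linarith),
          feq 0 (2/3 - t) (by push_cast; linarith) (by push_cast; linarith),
          feq 1 (1/2 + t) (by push_cast; linarith) (by push_cast; linarith)]
        decide
      · rw [feq 1 (2*t) (by push_cast; linarith) (by push_cast; linarith),
          feq (-3) (-3*t) (by push_cast; linarith) (by push_cast; linarith),
          feq (-1) (1/3 - t) (by push_cast; linarith) (by push_cast; linarith),
          feq (-1) (2/3 - t) (by push_cast; linarith) (by push_cast; linarith),
          feq 1 (1/2 + t) (by push_cast; linarith) (by push_cast; linarith)]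
        decide

private lemma core (x : ℚ) (hx : Int.fract x ≠ 0) :
    -⌊2*x⌋ - ⌊-3*x⌋ = 1 - ⌊1/3 - x⌋ - ⌊2/3 - x⌋ - ⌊1/2 + x⌋ := by
  set n := ⌊x⌋ with hn
  set t := Int.fract x with ht
  have hxe : x = (n:ℚ) + t := by rw [ht, hn]; rw [Int.fract]; ring
  have h0 : 0 < t := lt_of_le_of_ne (Int.fract_nonneg x) (Ne.symm hx)
  have h1 : t < 1 := Int.fract_lt_one x
  have e1 : ⌊2*x⌋ = 2*n + ⌊2*t⌋ := by
    rw [show (2:ℚ)*x = ((2*n : ℤ):ℚ) + 2*t by rw [hxe]; push_cast; ring, Int.floor_intCast_add]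
  have e2 : ⌊-3*x⌋ = -3*n + ⌊-3*t⌋ := by
    rw [show (-3:ℚ)*x = ((-3*n : ℤ):ℚ) + -3*t by rw [hxe]; push_cast; ring, Int.floor_intCast_add]
  have e3 : ⌊1/3 - x⌋ = -n + ⌊1/3 - t⌋ := by
    rw [show (1:ℚ)/3 - x = ((-n : ℤ):ℚ) + (1/3 - t) by rw [hxe]; push_cast; ring,
      Int.floor_intCast_add]
  have e4 : ⌊2/3 - x⌋ = -n + ⌊2/3 - t⌋ := by
    rw [show (2:ℚ)/3 - x = ((-n : ℤ):ℚ) + (2/3 - t) by rw [hxe]; push_cast; ring,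
      Int.floor_intCast_add]
  have e5 : ⌊1/2 + x⌋ = n + ⌊1/2 + t⌋ := by
    rw [show (1:ℚ)/2 + x = ((n : ℤ):ℚ) + (1/2 + t) by rw [hxe]; push_cast; ring,
      Int.floor_intCast_add]
  rw [e1, e2, e3, e4, e5]
  have := floor_aux t h0 h1
  omega

theorem stmt_1 (p r : ℕ) (hp : p.Prime) (hp5 : 5 ≤ p) (hr : 1 ≤ r)
    (q : ℕ) (hq : q = p ^ r)
    (a : ℕ) (ha0 : 0 < a) (ha : a ≤ q - 2)
    (i : ℕ) (hi : i ≤ r - 1) :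
    -⌊(2 * a * p ^ i : ℚ) / ((q : ℚ) - 1)⌋ - ⌊(-3 * a * p ^ i : ℚ) / ((q : ℚ) - 1)⌋
    = 1 - ⌊Int.fract ((p ^ i : ℚ) / 3) - (a * p ^ i : ℚ) / ((q : ℚ) - 1)⌋
      - ⌊Int.fract ((2 * p ^ i : ℚ) / 3) - (a * p ^ i : ℚ) / ((q : ℚ) - 1)⌋
      - ⌊Int.fract ((p ^ i : ℚ) / 2) + (a * p ^ i : ℚ) / ((q : ℚ) - 1)⌋ := by
  have hq5 : 5 ≤ q := by
    calc 5 ≤ p := hp5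
    _ ≤ p ^ r := Nat.le_self_pow (by omega) p
    _ = q := hq.symm
  have hD0 : (0:ℚ) < (q:ℚ) - 1 := by
    have : (5:ℚ) ≤ (q:ℚ) := by exact_mod_cast hq5
    linarith
  set x : ℚ := (a * p ^ i : ℚ) / ((q : ℚ) - 1) with hxdef
  -- x is not an integer
  have hcop : Nat.Coprime (q - 1) (p ^ i) := by
    apply Nat.Coprime.pow_right
    have hpq : ¬ p ∣ (q - 1) := by
      intro hdvd
      have hpq' : p ∣ q := hq ▸ dvd_pow_self p (by omega)
      have h1 : p ∣ q - (q - 1) := Nat.dvd_sub hpq' hdvd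
      have h2 : q - (q - 1) = 1 := by omega
      rw [h2] at h1
      have := Nat.le_of_dvd one_pos h1
      omega
    exact (Nat.coprime_comm.mp (hp.coprime_iff_not_dvd.mpr hpq))
  have hfr : Int.fract x ≠ 0 := by
    intro h
    have hxint : x = (⌊x⌋ : ℚ) := by
      have := Int.fract_add_floor x
      rw [Int.fract] at h
      linarith
    have key : (a * p ^ i : ℚ) = (⌊x⌋ : ℚ) * ((q:ℚ) - 1) := by
      rw [show (a * p ^ i : ℚ) = x * ((q:ℚ) - 1) by rw [hxdef, div_mul_cancel₀ _ hD0.ne']]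
      exact congrArg (· * ((q:ℚ) - 1)) hxint
    have keyZ : (a : ℤ) * (p:ℤ) ^ i = ⌊x⌋ * ((q:ℤ) - 1) := by exact_mod_cast key
    have hdvdZ : ((q:ℤ) - 1) ∣ (a : ℤ) * (p:ℤ) ^ i := ⟨⌊x⌋, by linarith [keyZ]⟩
    have hdvdN : (q - 1) ∣ a * p ^ i := by
      have : ((q - 1 : ℕ) : ℤ) ∣ ((a * p ^ i : ℕ) : ℤ) := by
        push_cast; rw [Nat.cast_sub (by omega)] at *; push_cast at hdvdZ ⊢; exact hdvdZ
      exact_mod_cast this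
    have : (q - 1) ∣ a := (Nat.Coprime.dvd_of_dvd_mul_right hcop) hdvdN
    have := Nat.le_of_dvd ha0 this
    omega
  -- rewrite divisions as multiples of x
  have hx2 : (2 * a * p ^ i : ℚ) / ((q : ℚ) - 1) = 2 * x := by rw [hxdef]; ring
  have hx3 : (-3 * a * p ^ i : ℚ) / ((q : ℚ) - 1) = -3 * x := by rw [hxdef]; ring
  rw [hx2, hx3]
  -- fractional parts
  have h2p : ¬ 2 ∣ p ^ i := fun h =>
    by have := (Nat.prime_dvd_prime_iff_eq Nat.prime_two hp).mp (Nat.Prime.dvd_of_dvd_pow Nat.prime_two h); omega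
  have h3p : ¬ 3 ∣ p ^ i := fun h =>
    by have := (Nat.prime_dvd_prime_iff_eq Nat.prime_three hp).mp (Nat.Prime.dvd_of_dvd_pow Nat.prime_three h); omega
  have hf2 : Int.fract ((p ^ i : ℚ) / 2) = 1/2 := by
    obtain ⟨k, hk⟩ : ∃ k, p ^ i = 2 * k + 1 := ⟨p ^ i / 2, by omega⟩
    have he : (p ^ i : ℚ) / 2 = ((k:ℤ):ℚ) + 1/2 := by
      have h' : ((p:ℚ)) ^ i = 2*(k:ℚ)+1 := by exact_mod_cast hk
      rw [h']; push_cast; ring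
    rw [Int.fract, he, Int.floor_intCast_add,
      feq 0 (1/2 : ℚ) (by norm_num) (by norm_num)]
    push_cast; ring
  have hmod : p ^ i % 3 = 1 ∨ p ^ i % 3 = 2 := by omega
  have hgoal : ∀ c₁ c₂ : ℚ,
      Int.fract ((p ^ i : ℚ) / 3) = c₁ → Int.fract ((2 * p ^ i : ℚ) / 3) = c₂ →
      (c₁ = 1/3 ∧ c₂ = 2/3 ∨ c₁ = 2/3 ∧ c₂ = 1/3) →
      -⌊2*x⌋ - ⌊-3*x⌋ = 1 - ⌊c₁ - x⌋ - ⌊c₂ - x⌋ - ⌊Int.fract ((p ^ i : ℚ) / 2) + x⌋ := by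
    intro c₁ c₂ h₁ h₂ hc
    rw [hf2]
    have := core x hfr
    rcases hc with ⟨e₁, e₂⟩ | ⟨e₁, e₂⟩ <;> subst e₁ <;> subst e₂ <;> linarith
  rcases hmod with hm | hm
  · obtain ⟨k, hk⟩ : ∃ k, p ^ i = 3 * k + 1 := ⟨p ^ i / 3, by omega⟩
    have f1 : Int.fract ((p ^ i : ℚ) / 3) = 1/3 := by
      have he : (p ^ i : ℚ) / 3 = ((k:ℤ):ℚ) + 1/3 := by
        have h' : ((p:ℚ)) ^ i = 3*(k:ℚ)+1 := by exact_mod_cast hk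
        rw [h']; push_cast; ring
      rw [Int.fract, he, Int.floor_intCast_add, feq 0 (1/3 : ℚ) (by norm_num) (by norm_num)]
      push_cast; ring
    have f2 : Int.fract ((2 * p ^ i : ℚ) / 3) = 2/3 := by
      have he : (2 * p ^ i : ℚ) / 3 = ((2*k:ℤ):ℚ) + 2/3 := by
        have h' : ((p:ℚ)) ^ i = 3*(k:ℚ)+1 := by exact_mod_cast hk
        rw [h']; push_cast; ring
      rw [Int.fract, he, Int.floor_intCast_add, feq 0 (2/3 : ℚ) (by norm_num) (by norm_num)]
      push_cast; ring
    rw [f1, f2]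
    exact hgoal (1/3) (2/3) f1 f2 (Or.inl ⟨rfl, rfl⟩)
  · obtain ⟨k, hk⟩ : ∃ k, p ^ i = 3 * k + 2 := ⟨p ^ i / 3, by omega⟩
    have f1 : Int.fract ((p ^ i : ℚ) / 3) = 2/3 := by
      have he : (p ^ i : ℚ) / 3 = ((k:ℤ):ℚ) + 2/3 := by
        have h' : ((p:ℚ)) ^ i = 3*(k:ℚ)+2 := by exact_mod_cast hk
        rw [h']; push_cast; ring
      rw [Int.fract, he, Int.floor_intCast_add, feq 0 (2/3 : ℚ) (by norm_num) (by norm_num)]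
      push_cast; ring
    have f2 : Int.fract ((2 * p ^ i : ℚ) / 3) = 1/3 := by
      have he : (2 * p ^ i : ℚ) / 3 = ((2*k+1:ℤ):ℚ) + 1/3 := by
        have h' : ((p:ℚ)) ^ i = 3*(k:ℚ)+2 := by exact_mod_cast hk
        rw [h']; push_cast; ring
      rw [Int.fract, he, Int.floor_intCast_add, feq 0 (1/3 : ℚ) (by norm_num) (by norm_num)]
      push_cast; ring
    rw [f1, f2]
    exact hgoal (2/3) (1/3) f1 f2 (Or.inr ⟨rfl, rfl⟩)
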